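/- Let G be a countable group, A a finite set, and X ⊆ A^G a G-subshift with shift action T. Let N be a finitely generated subgroup of the centralizer Cent_{Homeo(X)}(⟨T⟩) of the shift action inside the group of self-homeomorphisms of X. If every N-orbit in X is finite, then N is a finite group. -/

import Mathlib

open Metric Filter Topology

/-- The group of self-homeomorphisms of a topological space, under composition
(`f * g = f ∘ g`). -/
instance homeomorphGroup {Z : Type*} [TopologicalSpace Z] : Group (Z ≃ₜ Z) where
  mul f g := g.trans f
  one := Homeomorph.refl Z
  inv := Homeomorph.symm
  mul_assoc _ _ _ := Homeomorph.ext fun _ => rfl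
  one_mul _ := Homeomorph.ext fun _ => rfl
  mul_one _ := Homeomorph.ext fun _ => rfl
  inv_mul_cancel f := Homeomorph.ext f.symm_apply_apply

namespace FGCAux

set_option linter.unusedSectionVars false

/-! ### Abstract group-theoretic lemmas -/

/-- Homs from a group with a finite generating set to a finite group form a finite set. -/
theorem aux_finite_homs {H M : Type*} [Group H] [Group M] [Finite M] (S : Set H)
    (hSfin : S.Finite) (hS : Subgroup.closure S = ⊤) : Finite (H →* M) := by
  have : Finite ↥S := hSfin.to_subtype
  have hinj : Function.Injective (fun (f : H →* M) => (fun s : S => f s.1)) := by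
    intro f g hfg
    ext x
    have hx : x ∈ Subgroup.closure S := hS ▸ Subgroup.mem_top x
    induction hx using Subgroup.closure_induction with
    | mem y hy => exact congrFun hfg ⟨y, hy⟩
    | one => simp
    | mul y z hy hz hy' hz' => simp [map_mul, hy', hz']
    | inv y hy hy' => simp [map_inv, hy']
  exact Finite.of_injective _ hinj

/-- In a finitely generated group there is a single finite-index subgroup contained in
every subgroup of index at most `n`. -/
theorem aux_bounded_index_inter {H : Type*} [Group H] (S : Set H)
    (hSfin : S.Finite) (hS : Subgroup.closure S = ⊤) (n : ℕ) :
    ∃ D : Subgroup H, D.FiniteIndex ∧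
      ∀ K : Subgroup H, K.index ≠ 0 → K.index ≤ n → D ≤ K := by
  classical
  have hfH : Finite (H →* Equiv.Perm (Fin n)) := aux_finite_homs S hSfin hS
  refine ⟨⨅ ψ : H →* Equiv.Perm (Fin n), ψ.ker, ?_, ?_⟩
  · refine Subgroup.finiteIndex_iInf fun ψ => ?_
    constructor
    rw [Subgroup.index_ker]
    have h1 : Finite ↥ψ.range := Subtype.finite
    have h2 : Nonempty ↥ψ.range := ⟨1, one_mem _⟩
    exact Nat.card_ne_zero.mpr ⟨h2, h1⟩
  · intro K hK0 hKn
    have hKfin : Finite (H ⧸ K) := Nat.finite_of_card_ne_zero (K.index_eq_card ▸ hK0)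
    have : Fintype (H ⧸ K) := Fintype.ofFinite _
    have hcard : Fintype.card (H ⧸ K) = K.index := by
      rw [K.index_eq_card, Nat.card_eq_fintype_card]
    have e : (H ⧸ K) ≃ Fin K.index := Fintype.equivFinOfCardEq hcard
    have emb : (H ⧸ K) ↪ Fin n := e.toEmbedding.trans (Fin.castLEEmb hKn)
    set ψ : H →* Equiv.Perm (Fin n) :=
      (Equiv.Perm.viaEmbeddingHom emb).comp (MulAction.toPermHom H (H ⧸ K)) with hψ
    intro h hh
    have h1 : ψ h = 1 := Subgroup.mem_iInf.mp hh ψ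
    have h2 : MulAction.toPermHom H (H ⧸ K) h = 1 := by
      apply Equiv.Perm.viaEmbeddingHom_injective emb
      rw [map_one]
      exact h1
    have h3 : h • ((1 : H) : H ⧸ K) = ((1 : H) : H ⧸ K) := by
      simpa [MulAction.toPermHom] using Equiv.Perm.ext_iff.mp h2 ((1 : H) : H ⧸ K)
    rw [MulAction.Quotient.smul_mk] at h3
    have h4 : (h • (1:H) : H)⁻¹ * 1 ∈ K := QuotientGroup.eq.mp h3
    simpa [smul_eq_mul] using h4

/-- A finite family of constraints, each solvable by a member of a chain, is solvable
by a single member of the chain. -/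
theorem aux_chain_bound {α β : Type*} (c : Set (Set α)) (hc : IsChain (· ⊆ ·) c)
    (hne : c.Nonempty) (T : Finset β) (D : β → Set α) :
    (∀ s ∈ T, ∃ Z ∈ c, Z ∩ D s = ∅) → ∃ Z ∈ c, ∀ s ∈ T, Z ∩ D s = ∅ := by
  classical
  induction T using Finset.induction_on with
  | empty => intro _; obtain ⟨Z, hZ⟩ := hne; exact ⟨Z, hZ, by simp⟩
  | @insert a T' ha ih =>
    intro h
    obtain ⟨Z1, hZ1c, hZ1⟩ := ih (fun s hs => h s (Finset.mem_insert_of_mem hs))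
    obtain ⟨Z2, hZ2c, hZ2⟩ := h a (Finset.mem_insert_self _ _)
    rcases eq_or_ne Z1 Z2 with rfl | hne12
    · refine ⟨Z1, hZ1c, fun s hs => ?_⟩
      rcases Finset.mem_insert.mp hs with rfl | hs'
      · exact hZ2
      · exact hZ1 s hs'
    · rcases hc hZ1c hZ2c hne12 with hle | hle
      · refine ⟨Z1, hZ1c, fun s hs => ?_⟩
        rcases Finset.mem_insert.mp hs with rfl | hs'
        · exact Set.eq_empty_of_subset_empty (hZ2 ▸ Set.inter_subset_inter_left _ hle)
        · exact hZ1 s hs'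
      · refine ⟨Z2, hZ2c, fun s hs => ?_⟩
        rcases Finset.mem_insert.mp hs with rfl | hs'
        · exact hZ2
        · exact Set.eq_empty_of_subset_empty ((hZ1 s hs') ▸ Set.inter_subset_inter_left _ hle)

/-! ### The concrete set-up -/

instance homeomorphMulAction {Z : Type*} [TopologicalSpace Z] : MulAction (Z ≃ₜ Z) Z where
  smul f x := f x
  one_smul _ := rfl
  mul_smul _ _ _ := rfl

variable {G : Type*} [Group G] {A : Type*} [TopologicalSpace A] [DiscreteTopology A]
  {X : Set (G → A)}

/-- The shift homeomorphisms of the subshift. -/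
def tau (hXinv : ∀ x ∈ X, ∀ g : G, (fun h => x (h * g)) ∈ X) (g : G) : ↥X ≃ₜ ↥X where
  toFun x := ⟨fun h => x.1 (h * g), hXinv x.1 x.2 g⟩
  invFun x := ⟨fun h => x.1 (h * g⁻¹), hXinv x.1 x.2 g⁻¹⟩
  left_inv x := by ext h; simp [mul_assoc]
  right_inv x := by ext h; simp [mul_assoc]
  continuous_toFun := by
    apply Continuous.subtype_mk
    exact continuous_pi fun h => (continuous_apply (h * g)).comp continuous_subtype_val
  continuous_invFun := by
    apply Continuous.subtype_mk
    exact continuous_pi fun h => (continuous_apply (h * g⁻¹)).comp continuous_subtype_val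

variable (hXinv : ∀ x ∈ X, ∀ g : G, (fun h => x (h * g)) ∈ X)
variable (N : Subgroup (↥X ≃ₜ ↥X))

theorem tau_tau (g g' : G) (x : ↥X) : tau hXinv g (tau hXinv g' x) = tau hXinv (g * g') x := by
  apply Subtype.ext
  funext h
  show (x : G → A) ((h * g) * g') = (x : G → A) (h * (g * g'))
  rw [mul_assoc]

theorem tau_one (x : ↥X) : tau hXinv 1 x = x := by
  apply Subtype.ext
  funext h
  show (x : G → A) (h * 1) = (x : G → A) h
  rw [mul_one]

theorem tau_cancel (g : G) (x : ↥X) : tau hXinv g⁻¹ (tau hXinv g x) = x := by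
  rw [tau_tau, inv_mul_cancel, tau_one]

variable (hNcomm : ∀ φ ∈ N, ∀ (g : G) (x : ↥X) (h : G),
      (φ ⟨fun h' => x.1 (h' * g), hXinv x.1 x.2 g⟩ : G → A) h = (φ x : G → A) (h * g))

include hNcomm in
/-- elements of `N` commute with the shift. -/
theorem comm_tau (γ : ↥N) (g : G) (x : ↥X) :
    γ • (tau hXinv g x) = tau hXinv g (γ • x) := by
  apply Subtype.ext
  funext h
  show (γ.1 (tau hXinv g x) : G → A) h = ((γ • x : ↥X) : G → A) (h * g)
  exact hNcomm γ.1 γ.2 g x h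

/-- The displacement set of `γ`. -/
def Delta (γ : ↥N) : Set ↥X := {x | ((γ • x : ↥X) : G → A) 1 ≠ (x : G → A) 1}

theorem isClosed_Delta (γ : ↥N) : IsClosed (Delta N γ) := by
  have c1 : Continuous fun x : ↥X => ((γ • x : ↥X) : G → A) 1 :=
    (continuous_apply (1 : G)).comp (continuous_subtype_val.comp γ.1.continuous)
  have c2 : Continuous fun x : ↥X => (x : G → A) 1 :=
    (continuous_apply (1 : G)).comp continuous_subtype_val
  have h : Delta N γ
      = (fun x : ↥X => (((γ • x : ↥X) : G → A) 1, (x : G → A) 1)) ⁻¹' {p : A × A | p.1 = p.2}ᶜ :=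
    rfl
  rw [h]
  exact IsClosed.preimage (c1.prodMk c2) (isClosed_discrete _)

include hNcomm in
/-- If `Z` is shift-invariant and misses the displacement set of `γ`, then `γ` fixes `Z`
pointwise. -/
theorem fix_of_disjoint (γ : ↥N) (Z : Set ↥X)
    (hZtau : ∀ g : G, ∀ z ∈ Z, tau hXinv g z ∈ Z)
    (hdisj : Z ∩ Delta N γ = ∅) : ∀ z ∈ Z, γ • z = z := by
  intro z hz
  apply Subtype.ext
  funext g
  have h1 : ((γ • (tau hXinv g z) : ↥X) : G → A) 1 = ((tau hXinv g z) : G → A) 1 := by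
    by_contra hne
    have : tau hXinv g z ∈ Z ∩ Delta N γ := ⟨hZtau g z hz, hne⟩
    simp [hdisj] at this
  have h2 : ((γ • (tau hXinv g z) : ↥X) : G → A) 1 = ((γ • z : ↥X) : G → A) (1 * g) :=
    hNcomm γ.1 γ.2 g z 1
  have h3 : ((tau hXinv g z) : G → A) 1 = (z : G → A) (1 * g) := rfl
  rw [h2, h3, one_mul] at h1
  exact h1

/-! ### The sets of points with orbit of size at most `n` -/

/-- Points where any `n+1` elements of `N` have a coincidence. -/
def Xn (n : ℕ) : Set ↥X :=
  {x | ∀ f : Fin (n + 1) → ↥N, ∃ p : Fin (n + 1) × Fin (n + 1), p.1 ≠ p.2 ∧ f p.1 • x = f p.2 • x}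

theorem isClosed_Xn (n : ℕ) : IsClosed (Xn N n) := by
  have h : Xn N n = ⋂ f : Fin (n + 1) → ↥N,
      ⋃ p : {p : Fin (n + 1) × Fin (n + 1) // p.1 ≠ p.2},
        {x : ↥X | f p.1.1 • x = f p.1.2 • x} := by
    ext x
    simp only [Xn, Set.mem_setOf_eq, Set.mem_iInter, Set.mem_iUnion]
    constructor
    · intro hx f
      obtain ⟨p, hp, hpx⟩ := hx f
      exact ⟨⟨p, hp⟩, hpx⟩
    · intro hx f
      obtain ⟨⟨p, hp⟩, hpx⟩ := hx f
      exact ⟨p, hp, hpx⟩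
  rw [h]
  refine isClosed_iInter fun f => ?_
  refine isClosed_iUnion_of_finite fun p => ?_
  exact isClosed_eq (f p.1.1).1.continuous (f p.1.2).1.continuous

theorem Xn_smul (n : ℕ) (γ : ↥N) {x : ↥X} (hx : x ∈ Xn N n) : γ • x ∈ Xn N n := by
  intro f
  obtain ⟨p, hp, hpx⟩ := hx (fun i => f i * γ)
  rw [mul_smul, mul_smul] at hpx
  exact ⟨p, hp, hpx⟩

include hNcomm in
theorem Xn_tau (n : ℕ) (g : G) {x : ↥X} (hx : x ∈ Xn N n) : tau hXinv g x ∈ Xn N n := by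
  intro f
  obtain ⟨p, hp, hpx⟩ := hx f
  refine ⟨p, hp, ?_⟩
  rw [comm_tau hXinv N hNcomm, comm_tau hXinv N hNcomm, hpx]

/-! ### Orbits -/

variable (horb : ∀ x : ↥X, {y : ↥X | ∃ φ ∈ N, φ x = y}.Finite)

include horb in
theorem orbit_finite (x : ↥X) : (MulAction.orbit ↥N x).Finite := by
  have h : MulAction.orbit ↥N x = {y : ↥X | ∃ φ ∈ N, φ x = y} := by
    ext y
    rw [MulAction.mem_orbit_iff]
    constructor
    · rintro ⟨γ, rfl⟩; exact ⟨γ.1, γ.2, rfl⟩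
    · rintro ⟨φ, hφ, rfl⟩; exact ⟨⟨φ, hφ⟩, rfl⟩
  rw [h]
  exact horb x

include horb in
theorem mem_Xn_card (x : ↥X) : x ∈ Xn N (Nat.card ↥(MulAction.orbit ↥N x)) := by
  classical
  intro f
  haveI : Fintype ↥(MulAction.orbit ↥N x) := (orbit_finite N horb x).fintype
  have hcard : Fintype.card (Fin (Nat.card ↥(MulAction.orbit ↥N x) + 1))
      > Fintype.card ↥(MulAction.orbit ↥N x) := by
    simp [Nat.card_eq_fintype_card]
  obtain ⟨i, j, hij, hval⟩ := Fintype.exists_ne_map_eq_of_card_lt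
    (fun i : Fin (Nat.card ↥(MulAction.orbit ↥N x) + 1) =>
      (⟨f i • x, MulAction.mem_orbit x (f i)⟩ : ↥(MulAction.orbit ↥N x))) hcard
  exact ⟨(i, j), hij, congrArg Subtype.val hval⟩

include horb in
theorem card_orbit_le {n : ℕ} {x : ↥X} (hx : x ∈ Xn N n) :
    Nat.card ↥(MulAction.orbit ↥N x) ≤ n := by
  classical
  by_contra hlt
  push_neg at hlt
  haveI : Fintype ↥(MulAction.orbit ↥N x) := (orbit_finite N horb x).fintype
  have hcard : Fintype.card (Fin (n + 1)) ≤ Fintype.card ↥(MulAction.orbit ↥N x) := by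
    simpa [Nat.card_eq_fintype_card] using hlt
  obtain ⟨emb⟩ := Function.Embedding.nonempty_of_card_le hcard
  have hch : ∀ i : Fin (n + 1), ∃ δ : ↥N, δ • x = (emb i).1 := fun i =>
    MulAction.mem_orbit_iff.mp (emb i).2
  choose γf hγf using hch
  obtain ⟨p, hp, hpx⟩ := hx γf
  apply hp
  apply emb.injective
  apply Subtype.ext
  rw [← hγf p.1, ← hγf p.2, hpx]

include horb in
theorem stab_index_le {n : ℕ} {x : ↥X} (hx : x ∈ Xn N n) :
    (MulAction.stabilizer ↥N x).index ≠ 0 ∧ (MulAction.stabilizer ↥N x).index ≤ n := by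
  have hidx : (MulAction.stabilizer ↥N x).index = Nat.card ↥(MulAction.orbit ↥N x) := by
    rw [Subgroup.index_eq_card]
    exact (Nat.card_congr (MulAction.orbitEquivQuotientStabilizer ↥N x)).symm
  constructor
  · rw [hidx]
    refine Nat.card_ne_zero.mpr ⟨⟨⟨x, MulAction.mem_orbit_self x⟩⟩, ?_⟩
    exact (orbit_finite N horb x).to_subtype
  · rw [hidx]
    exact card_orbit_le N horb hx

/-! ### Pointwise stabilizers -/

/-- The pointwise stabilizer of a subset. -/
def KK (Z : Set ↥X) : Subgroup ↥N := ⨅ z ∈ Z, MulAction.stabilizer ↥N z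

theorem mem_KK {Z : Set ↥X} {γ : ↥N} : γ ∈ KK N Z ↔ ∀ z ∈ Z, γ • z = z := by
  simp [KK, Subgroup.mem_iInf, MulAction.mem_stabilizer_iff]

include horb in
/-- Bounded orbits give a finite-index pointwise stabilizer. -/
theorem KK_finiteIndex (hfg : Group.FG ↥N) {n : ℕ} {Z : Set ↥X} (hZ : Z ⊆ Xn N n) :
    (KK N Z).FiniteIndex := by
  obtain ⟨S, hS, hSfin⟩ := Group.fg_iff.mp hfg
  obtain ⟨D, hD, hDle⟩ := aux_bounded_index_inter S hSfin hS n
  have hle : D ≤ KK N Z := by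
    intro γ hγ
    rw [mem_KK]
    intro z hz
    have hstab := stab_index_le N horb (hZ hz)
    exact MulAction.mem_stabilizer_iff.mp
      (hDle (MulAction.stabilizer ↥N z) hstab.1 hstab.2 hγ)
  constructor
  intro h0
  exact hD.index_ne_zero (zero_dvd_iff.mp (h0 ▸ Subgroup.index_dvd_of_le hle))

end FGCAux

open FGCAux in
/-- Let `X ⊆ A^G` be a `G`-subshift (`G` countable, `A` finite) and `N` a finitely
generated subgroup of the centralizer of the shift action inside `Homeo(X)`.
If every `N`-orbit is finite, then `N` is finite. -/
theorem fg_centralizer_subgroup_with_finite_orbits_is_finite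
    {G : Type*} [Group G] [Countable G]
    {A : Type*} [TopologicalSpace A] [DiscreteTopology A] [Finite A]
    (X : Set (G → A)) (hXclosed : IsClosed X)
    (hXinv : ∀ x ∈ X, ∀ g : G, (fun h => x (h * g)) ∈ X)
    (N : Subgroup (↥X ≃ₜ ↥X)) (hNfg : Subgroup.FG N)
    -- every element of `N` commutes with every shift map
    (hNcomm : ∀ φ ∈ N, ∀ (g : G) (x : ↥X) (h : G),
      (φ ⟨fun h' => x.1 (h' * g), hXinv x.1 x.2 g⟩ : G → A) h = (φ x : G → A) (h * g))
    -- every `N`-orbit is finite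
    (horb : ∀ x : ↥X, {y : ↥X | ∃ φ ∈ N, φ x = y}.Finite) :
    (N : Set (↥X ≃ₜ ↥X)).Finite := by
  classical
  haveI : CompactSpace ↥X := isCompact_iff_compactSpace.mp hXclosed.isCompact
  have hFGN : Group.FG ↥N := (Group.fg_iff_subgroup_fg N).mpr hNfg
  set 𝒞 : Set (Set ↥X) := {Z | IsClosed Z ∧ (∀ γ : ↥N, ∀ z ∈ Z, γ • z ∈ Z) ∧
      (∀ g : G, ∀ z ∈ Z, tau hXinv g z ∈ Z) ∧ ¬(KK N Z).FiniteIndex} with h𝒞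
  -- the chain condition for Zorn's lemma
  have hchain : ∀ c ⊆ 𝒞, IsChain (· ⊆ ·) c → c.Nonempty → ∃ lb ∈ 𝒞, ∀ s ∈ c, lb ⊆ s := by
    intro c hc𝒞 hch hcne
    refine ⟨⋂₀ c, ?_, fun Z hZ => Set.sInter_subset_of_mem hZ⟩
    refine ⟨isClosed_sInter fun Z hZ => (hc𝒞 hZ).1, ?_, ?_, ?_⟩
    · intro γ z hz
      exact Set.mem_sInter.mpr fun Z hZ => (hc𝒞 hZ).2.1 γ z (Set.mem_sInter.mp hz Z hZ)
    · intro g z hz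
      exact Set.mem_sInter.mpr fun Z hZ => (hc𝒞 hZ).2.2.1 g z (Set.mem_sInter.mp hz Z hZ)
    · intro hFI
      haveI : (KK N (⋂₀ c)).FiniteIndex := hFI
      haveI hfgK : Group.FG ↥(KK N (⋂₀ c)) := Subgroup.fg_of_index_ne_zero _
      have hKfg : (KK N (⋂₀ c)).FG := (Group.fg_iff_subgroup_fg _).mp hfgK
      obtain ⟨S, hSgen, hSfin⟩ := (Subgroup.fg_iff _).mp hKfg
      have hSsub : S ⊆ ↑(KK N (⋂₀ c)) := hSgen ▸ Subgroup.subset_closure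
      have hper : ∀ s ∈ hSfin.toFinset, ∃ Z ∈ c, Z ∩ Delta N s = ∅ := by
        intro s hs
        have hsK : s ∈ KK N (⋂₀ c) := hSsub (hSfin.mem_toFinset.mp hs)
        have hdisj : Delta N s ∩ ⋂₀ c = ∅ := by
          apply Set.eq_empty_iff_forall_notMem.mpr
          rintro z ⟨hzD, hzI⟩
          have hz : s • z = z := (mem_KK N).mp hsK z hzI
          exact hzD (by rw [hz])
        haveI : Nonempty ↥c := hcne.to_subtype
        have hcomp : IsCompact (Delta N s) := (isClosed_Delta N s).isCompact
        have hdir : Directed (· ⊇ ·) (fun Z : ↥c => Z.1) := by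
          intro Z W
          rcases eq_or_ne Z.1 W.1 with he | hne2
          · refine ⟨Z, subset_rfl, ?_⟩
            show Z.1 ⊆ W.1
            rw [← he]
          · rcases hch Z.2 W.2 hne2 with h | h
            · exact ⟨Z, subset_rfl, h⟩
            · exact ⟨W, h, subset_rfl⟩
        have hint : Delta N s ∩ ⋂ Z : ↥c, Z.1 = ∅ := by
          rw [← Set.sInter_eq_iInter]
          exact hdisj
        obtain ⟨Z, hZ⟩ := hcomp.elim_directed_family_closed _
          (fun Z : ↥c => (hc𝒞 Z.2).1) hint hdir
        exact ⟨Z.1, Z.2, by rw [Set.inter_comm]; exact hZ⟩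
      obtain ⟨Z', hZ'c, hZ'dis⟩ := aux_chain_bound c hch hcne hSfin.toFinset (Delta N) hper
      have hSfix : ∀ s ∈ S, s ∈ KK N Z' := by
        intro s hs
        refine (mem_KK N).mpr (fix_of_disjoint hXinv N hNcomm s Z' ?_ ?_)
        · exact (hc𝒞 hZ'c).2.2.1
        · exact hZ'dis s (hSfin.mem_toFinset.mpr hs)
      have hle : KK N (⋂₀ c) ≤ KK N Z' := by
        rw [← hSgen]
        exact (Subgroup.closure_le _).mpr hSfix
      have hZ'FI : (KK N Z').FiniteIndex :=
        ⟨fun h0 => hFI.index_ne_zero (zero_dvd_iff.mp (h0 ▸ Subgroup.index_dvd_of_le hle))⟩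
      exact (hc𝒞 hZ'c).2.2.2 hZ'FI
  -- main claim: the pointwise stabilizer of everything has finite index
  have hmain : (KK N (Set.univ : Set ↥X)).FiniteIndex := by
    by_contra hbad
    have huniv : Set.univ ∈ 𝒞 :=
      ⟨isClosed_univ, fun _ _ _ => Set.mem_univ _, fun _ _ _ => Set.mem_univ _, hbad⟩
    obtain ⟨m, hmuniv, hmin⟩ := zorn_superset_nonempty 𝒞 hchain Set.univ huniv
    obtain ⟨hm_closed, hm_smul, hm_tau, hm_bad⟩ := hmin.prop
    -- m is nonempty
    have hm_ne : m.Nonempty := by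
      rcases Set.eq_empty_or_nonempty m with rfl | h
      · exfalso
        apply hm_bad
        have htop : KK N (∅ : Set ↥X) = ⊤ := by
          rw [Subgroup.eq_top_iff']
          intro γ
          exact (mem_KK N).mpr fun z hz => absurd hz (Set.notMem_empty z)
        rw [htop]
        infer_instance
      · exact h
    haveI : CompactSpace ↥m := isCompact_iff_compactSpace.mp hm_closed.isCompact
    haveI : Nonempty ↥m := hm_ne.to_subtype
    haveI : T2Space ↥m := by infer_instance
    haveI : LocallyCompactSpace ↥m := by infer_instance
    haveI : BaireSpace ↥m := by infer_instance
    -- Baire category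
    have hcover : ⋃ n : ℕ, (Subtype.val ⁻¹' Xn N n : Set ↥m) = Set.univ := by
      ext q
      simp only [Set.mem_iUnion, Set.mem_univ, iff_true, Set.mem_preimage]
      exact ⟨_, mem_Xn_card N horb q.1⟩
    obtain ⟨n, hn⟩ := nonempty_interior_of_iUnion_of_closed
      (fun n => (isClosed_Xn N n).preimage continuous_subtype_val) hcover
    obtain ⟨q0, hq0⟩ := hn
    obtain ⟨t, htsub, htopen, hq0t⟩ := mem_interior.mp hq0
    obtain ⟨OP, hOPopen, hOPpre⟩ := isOpen_induced_iff.mp htopen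
    have hq0OP : (q0 : ↥X) ∈ OP := by
      rw [← hOPpre] at hq0t
      exact hq0t
    have hUXn : ∀ y : ↥X, y ∈ OP → y ∈ m → y ∈ Xn N n := by
      intro y hy hym
      have hyt : (⟨y, hym⟩ : ↥m) ∈ t := by
        rw [← hOPpre]
        exact hy
      exact htsub hyt
    -- the saturated open set
    set BO : Set ↥X := ⋃ γ : ↥N, ⋃ g : G, ((tau hXinv g).trans γ.1) '' OP with hBO
    have hBOopen : IsOpen BO :=
      isOpen_iUnion fun γ => isOpen_iUnion fun g => (Homeomorph.isOpen_image _).mpr hOPopen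
    have hmemBO : ∀ y : ↥X,
        y ∈ BO ↔ ∃ γ : ↥N, ∃ g : G, ∃ x' ∈ OP, γ • tau hXinv g x' = y := by
      intro y
      simp only [hBO, Set.mem_iUnion, Set.mem_image]
      constructor
      · rintro ⟨γ, g, x', hx', rfl⟩
        exact ⟨γ, g, x', hx', rfl⟩
      · rintro ⟨γ, g, x', hx', rfl⟩
        exact ⟨γ, g, x', hx', rfl⟩
    have hBO_smul : ∀ (δ : ↥N) (y : ↥X), y ∈ BO → δ • y ∈ BO := by
      intro δ y hy
      obtain ⟨γ, g, x', hx', heq⟩ := (hmemBO y).mp hy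
      refine (hmemBO _).mpr ⟨δ * γ, g, x', hx', ?_⟩
      rw [← heq, mul_smul]
    have hBO_tau : ∀ (h : G) (y : ↥X), y ∈ BO → tau hXinv h y ∈ BO := by
      intro h y hy
      obtain ⟨γ, g, x', hx', heq⟩ := (hmemBO y).mp hy
      refine (hmemBO _).mpr ⟨γ, h * g, x', hx', ?_⟩
      rw [← heq, ← tau_tau hXinv h g x']
      exact comm_tau hXinv N hNcomm γ h _
    have hS0Xn : ∀ y : ↥X, y ∈ BO → y ∈ m → y ∈ Xn N n := by
      intro y hy hym
      obtain ⟨γ, g, x', hx', heq⟩ := (hmemBO y).mp hy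
      have hx'm : x' ∈ m := by
        have h1 : γ⁻¹ • y ∈ m := hm_smul γ⁻¹ y hym
        have h2 : γ⁻¹ • y = tau hXinv g x' := by
          rw [← heq, inv_smul_smul]
        have h3 : tau hXinv g⁻¹ (γ⁻¹ • y) ∈ m := hm_tau g⁻¹ _ h1
        rw [h2, tau_cancel] at h3
        exact h3
      have hx'Xn := hUXn x' hx' hx'm
      have h4 := Xn_tau hXinv N hNcomm n g hx'Xn
      have h5 := Xn_smul N n γ h4
      rw [heq] at h5
      exact h5
    -- the leftover closed invariant set
    set Z' : Set ↥X := m \ BO with hZ'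
    have hZ'closed : IsClosed Z' := by
      rw [hZ', Set.diff_eq]
      exact hm_closed.inter (isClosed_compl_iff.mpr hBOopen)
    have hZ'smul : ∀ γ : ↥N, ∀ z ∈ Z', γ • z ∈ Z' := by
      rintro γ z ⟨hzm, hzBO⟩
      refine ⟨hm_smul γ z hzm, fun hmem => hzBO ?_⟩
      have := hBO_smul γ⁻¹ _ hmem
      rwa [inv_smul_smul] at this
    have hZ'tau : ∀ g : G, ∀ z ∈ Z', tau hXinv g z ∈ Z' := by
      rintro g z ⟨hzm, hzBO⟩
      refine ⟨hm_tau g z hzm, fun hmem => hzBO ?_⟩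
      have := hBO_tau g⁻¹ _ hmem
      rwa [tau_cancel] at this
    have hx0BO : (q0 : ↥X) ∈ BO := by
      refine (hmemBO _).mpr ⟨1, 1, q0.1, hq0OP, ?_⟩
      rw [tau_one, one_smul]
    have hZ'ne : Z' ≠ m := by
      intro he
      have : (q0 : ↥X) ∈ Z' := by rw [he]; exact q0.2
      exact this.2 hx0BO
    have hKZ' : (KK N Z').FiniteIndex := by
      by_contra hbad'
      have hZ'𝒞 : Z' ∈ 𝒞 := ⟨hZ'closed, hZ'smul, hZ'tau, hbad'⟩
      have hge := hmin.2 hZ'𝒞 Set.diff_subset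
      exact hZ'ne (le_antisymm Set.diff_subset hge)
    set Zc : Set ↥X := closure (BO ∩ m) with hZc
    have hZcXn : Zc ⊆ Xn N n :=
      closure_minimal (fun y hy => hS0Xn y hy.1 hy.2) (isClosed_Xn N n)
    have hKZc : (KK N Zc).FiniteIndex := KK_finiteIndex N horb hFGN hZcXn
    have hinf_le : KK N Z' ⊓ KK N Zc ≤ KK N m := by
      intro γ hγ
      rw [mem_KK]
      intro z hz
      by_cases hzBO : z ∈ BO
      · exact (mem_KK N).mp hγ.2 z (subset_closure ⟨hzBO, hz⟩)
      · exact (mem_KK N).mp hγ.1 z ⟨hz, hzBO⟩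
    have hKm : (KK N m).FiniteIndex := by
      constructor
      intro h0
      have hne0 := Subgroup.index_inf_ne_zero hKZ'.index_ne_zero hKZc.index_ne_zero
      exact hne0 (zero_dvd_iff.mp (h0 ▸ Subgroup.index_dvd_of_le hinf_le))
    exact hm_bad hKm
  -- conclude
  have hbot : KK N (Set.univ : Set ↥X) = ⊥ := by
    rw [Subgroup.eq_bot_iff_forall]
    intro γ hγ
    have hfix := (mem_KK N).mp hγ
    apply Subtype.ext
    apply Homeomorph.ext
    intro z
    exact hfix z (Set.mem_univ z)
  rw [hbot] at hmain
  have hcard : Nat.card ↥N ≠ 0 := by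
    have := hmain.index_ne_zero
    rwa [Subgroup.index_bot] at this
  have hfin : Finite ↥N := Nat.finite_of_card_ne_zero hcard
  exact Set.finite_coe_iff.mp hfin
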